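/- Let V be a finite-dimensional real inner product space, R₊ a finite set of nonzero vectors in V, and m : V → ℕ a function with m(α) ≥ 1 for every α ∈ R₊. Let H ∈ V be nonzero and not proportional to any element of R₊ (i.e. H ∉ ℝα for every α ∈ R₊). Set P = {α ∈ R₊ : ⟪α, H⟫ ≠ 0} and for α ∈ P set v_H(α) = α/⟪α,H⟫ − H/‖H‖². Let A_H be the multiset consisting of m(α) copies of v_H(α) for each α ∈ P. Then A_H is invariant under negation (the multiset {−x : x ∈ A_H} equals A_H) if and only if there exists a map f : P → P with f(α) ≠ α for all α ∈ P such that for every α ∈ P there exist a real number n_α ≠ 0 and a sign ε_α ∈ {1, −1} with H = n_α·(α/‖α‖ + ε_α·f(α)/‖f(α)‖), and moreover Σ_{μ ∈ P, μ ∈ ℝα} m(μ) = Σ_{ν ∈ P, ν ∈ ℝ f(α)} m(ν) for every α ∈ P. -/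

import Mathlib

open scoped RealInnerProductSpace Classical

private lemma aux_norm {V : Type*} [NormedAddCommGroup V] [InnerProductSpace ℝ V]
    (H γ : V) (hH2 : (‖H‖ : ℝ) ^ 2 ≠ 0) (hγ : ⟪γ, H⟫ ≠ 0) :
    ‖(⟪γ, H⟫)⁻¹ • γ - (‖H‖ ^ 2)⁻¹ • H‖ ^ 2
      = ‖γ‖ ^ 2 * ((⟪γ, H⟫)⁻¹) ^ 2 - (‖H‖ ^ 2)⁻¹ := by
  rw [norm_sub_sq_real, real_inner_smul_left, real_inner_smul_right,
    norm_smul, norm_smul, Real.norm_eq_abs, Real.norm_eq_abs, mul_pow, mul_pow,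
    sq_abs, sq_abs]
  field_simp
  ring

private lemma aux_key1 {V : Type*} [NormedAddCommGroup V] [InnerProductSpace ℝ V]
    (H α β : V) (hH2 : (‖H‖ : ℝ) ^ 2 ≠ 0)
    (hna : ‖α‖ ≠ 0) (hnb : ‖β‖ ≠ 0) (haH : ⟪α, H⟫ ≠ 0) (hbH : ⟪β, H⟫ ≠ 0)
    (h : (⟪β, H⟫)⁻¹ • β - (‖H‖ ^ 2)⁻¹ • H = -((⟪α, H⟫)⁻¹ • α - (‖H‖ ^ 2)⁻¹ • H)) :
    ∃ n ε : ℝ, n ≠ 0 ∧ (ε = 1 ∨ ε = -1) ∧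
      H = n • (‖α‖⁻¹ • α + ε • ‖β‖⁻¹ • β) := by
  have hA0 : ‖α‖ * (⟪α, H⟫)⁻¹ ≠ 0 := mul_ne_zero hna (inv_ne_zero haH)
  have h2t : (2 * (‖H‖ ^ 2)⁻¹ : ℝ) ≠ 0 := by
    have := inv_ne_zero hH2
    simpa using this
  have hsq : (‖β‖ * (⟪β, H⟫)⁻¹) ^ 2 = (‖α‖ * (⟪α, H⟫)⁻¹) ^ 2 := by
    have h1 : ‖(⟪β, H⟫)⁻¹ • β - (‖H‖ ^ 2)⁻¹ • H‖ ^ 2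
        = ‖(⟪α, H⟫)⁻¹ • α - (‖H‖ ^ 2)⁻¹ • H‖ ^ 2 := by rw [h, norm_neg]
    rw [aux_norm H α hH2 haH, aux_norm H β hH2 hbH] at h1
    rw [mul_pow, mul_pow]
    linarith
  refine ⟨(2 * (‖H‖ ^ 2)⁻¹)⁻¹ * (⟪α, H⟫)⁻¹ * ‖α‖,
    ‖β‖ * (⟪β, H⟫)⁻¹ * (‖α‖ * (⟪α, H⟫)⁻¹)⁻¹,
    mul_ne_zero (mul_ne_zero (inv_ne_zero h2t) (inv_ne_zero haH)) hna, ?_, ?_⟩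
  · obtain hε | hε :=
      (Commute.all (‖β‖ * (⟪β, H⟫)⁻¹) (‖α‖ * (⟪α, H⟫)⁻¹)).sq_eq_sq_iff_eq_or_eq_neg.mp hsq
    · exact Or.inl (by rw [hε, mul_inv_cancel₀ hA0])
    · exact Or.inr (by rw [hε, neg_mul, mul_inv_cancel₀ hA0])
  · have eq1 : (⟪α, H⟫)⁻¹ • α + (⟪β, H⟫)⁻¹ • β = (2 * (‖H‖ ^ 2)⁻¹) • H := by
      linear_combination (norm := module) h
    set T := (‖H‖ ^ 2 : ℝ) with hT_def
    set a := (⟪α, H⟫ : ℝ) with ha_def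
    set b := (⟪β, H⟫ : ℝ) with hb_def
    have hHf : H = (2 * T⁻¹)⁻¹ • (a⁻¹ • α + b⁻¹ • β) := by
      rw [eq1, inv_smul_smul₀ h2t]
    rw [hHf]
    match_scalars
    all_goals (field_simp; try ring)

private lemma aux_key2 {V : Type*} [NormedAddCommGroup V] [InnerProductSpace ℝ V]
    (H α β : V) (n ε : ℝ) (hn : n ≠ 0) (hε : ε = 1 ∨ ε = -1)
    (hna : ‖α‖ ≠ 0) (hnb : ‖β‖ ≠ 0) (haH : ⟪α, H⟫ ≠ 0)
    (hHe : H = n • (‖α‖⁻¹ • α + ε • ‖β‖⁻¹ • β)) :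
    (⟪β, H⟫)⁻¹ • β - (‖H‖ ^ 2)⁻¹ • H = -((⟪α, H⟫)⁻¹ • α - (‖H‖ ^ 2)⁻¹ • H) := by
  have hε0 : ε ≠ 0 := by rcases hε with rfl | rfl <;> norm_num
  have hε2 : ε * ε = 1 := by rcases hε with rfl | rfl <;> norm_num
  set p := (⟪α, β⟫ : ℝ) with hp_def
  have hpc : ⟪β, α⟫ = p := (real_inner_comm β α).symm
  set s := (1 + ε * p * (‖α‖ * ‖β‖)⁻¹ : ℝ) with hs_def
  have hαH' : ⟪α, H⟫ = (n * ‖α‖) * s := by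
    rw [hHe]
    simp only [inner_add_right, real_inner_smul_right, real_inner_self_eq_norm_sq,
      ← hp_def]
    rw [hs_def]
    field_simp
  have hβH' : ⟪β, H⟫ = (n * (ε * ‖β‖)) * s := by
    rw [hHe]
    simp only [inner_add_right, real_inner_smul_right, real_inner_self_eq_norm_sq,
      hpc]
    rw [hs_def]
    field_simp
    linear_combination (-p) * hε2
  have hu : ‖‖α‖⁻¹ • α‖ = 1 := by
    rw [norm_smul, Real.norm_eq_abs, abs_inv, abs_norm, inv_mul_cancel₀ hna]
  have hw : ‖ε • ‖β‖⁻¹ • β‖ = 1 := by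
    rw [norm_smul, norm_smul, Real.norm_eq_abs, Real.norm_eq_abs, abs_inv, abs_norm,
      inv_mul_cancel₀ hnb, mul_one]
    rcases hε with rfl | rfl <;> norm_num
  have huw : ⟪‖α‖⁻¹ • α, ε • ‖β‖⁻¹ • β⟫ = ε * p * (‖α‖ * ‖β‖)⁻¹ := by
    rw [real_inner_smul_left, real_inner_smul_right, real_inner_smul_right, ← hp_def]
    ring
  have hH2' : ‖H‖ ^ 2 = (2 * n ^ 2) * s := by
    rw [hHe, norm_smul, mul_pow, norm_add_sq_real, hu, hw, huw, Real.norm_eq_abs,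
      sq_abs, hs_def]
    ring
  have hs0 : s ≠ 0 := by
    intro h0
    exact haH (by rw [hαH', h0, mul_zero])
  rcases hε with rfl | rfl <;>
    · rw [hαH', hβH', hH2', hHe]
      match_scalars <;> (field_simp; try ring)

/-- Criterion for austerity of the orbit `Ad(K)H` (Lemma on austere orbits):
with `P = {α ∈ R₊ | ⟪α,H⟫ ≠ 0}` and `v_H(α) = α/⟪α,H⟫ - H/‖H‖²`, the
multiplicity-weighted multiset `A_H = {v_H(α) with multiplicity m(α)}` is
invariant under negation iff there is a fixed-point-free map `f : P → P` with
`H = n_α (α/‖α‖ + ε_α f(α)/‖f(α)‖)` and matching multiplicity sums along lines. -/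
theorem stmt_4 {V : Type*} [NormedAddCommGroup V] [InnerProductSpace ℝ V]
    [FiniteDimensional ℝ V] (Rp : Finset V) (hR : ∀ α ∈ Rp, α ≠ 0)
    (m : V → ℕ) (hm : ∀ α ∈ Rp, 1 ≤ m α)
    (H : V) (hH : H ≠ 0) (hprop : ∀ α ∈ Rp, ∀ c : ℝ, H ≠ c • α)
    (P : Finset V) (hP : P = Rp.filter fun α => ⟪α, H⟫ ≠ 0)
    (vH : V → V) (hvH : ∀ α, vH α = (⟪α, H⟫)⁻¹ • α - (‖H‖ ^ 2)⁻¹ • H)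
    (AH : Multiset V)
    (hAH : AH = P.val.bind fun α => Multiset.replicate (m α) (vH α)) :
    AH.map (fun x => -x) = AH ↔
      ∃ f : V → V,
        (∀ α ∈ P, f α ∈ P) ∧
        (∀ α ∈ P, f α ≠ α) ∧
        (∀ α ∈ P, ∃ n ε : ℝ, n ≠ 0 ∧ (ε = 1 ∨ ε = -1) ∧
          H = n • (‖α‖⁻¹ • α + ε • ‖f α‖⁻¹ • f α)) ∧
        (∀ α ∈ P,
          ∑ μ ∈ P.filter (fun μ => ∃ c : ℝ, μ = c • α), m μ
            = ∑ ν ∈ P.filter (fun ν => ∃ c : ℝ, ν = c • f α), m ν) := by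
  classical
  have hH2 : (‖H‖ : ℝ) ^ 2 ≠ 0 := pow_ne_zero 2 (norm_ne_zero_iff.mpr hH)
  have hPmem : ∀ α ∈ P, α ∈ Rp ∧ ⟪α, H⟫ ≠ 0 := by
    intro α hα; rw [hP] at hα; exact Finset.mem_filter.mp hα
  -- v_H never vanishes on P
  have hvne : ∀ α ∈ P, vH α ≠ 0 := by
    intro α hα hv
    obtain ⟨hαR, hαH⟩ := hPmem α hα
    rw [hvH, sub_eq_zero] at hv
    apply hprop α hαR (‖H‖ ^ 2 * (⟪α, H⟫)⁻¹)
    have := congrArg (fun v : V => (‖H‖ ^ 2 : ℝ) • v) hv.symm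
    simpa [smul_smul, smul_inv_smul₀ hH2] using this
  -- v_H identifies points on the same line
  have veq : ∀ α ∈ P, ∀ μ ∈ P, (vH μ = vH α ↔ ∃ c : ℝ, μ = c • α) := by
    intro α hα μ hμ
    obtain ⟨hαR, hαH⟩ := hPmem α hα
    obtain ⟨hμR, hμH⟩ := hPmem μ hμ
    constructor
    · intro h
      rw [hvH, hvH, sub_left_inj] at h
      refine ⟨⟪μ, H⟫ * (⟪α, H⟫)⁻¹, ?_⟩
      have := congrArg (fun v : V => (⟪μ, H⟫ : ℝ) • v) h
      simpa [smul_smul, smul_inv_smul₀ hμH, mul_comm] using this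
    · rintro ⟨c, rfl⟩
      have hc : c ≠ 0 := by
        rintro rfl; simp at hμH
      rw [hvH, hvH, sub_left_inj, real_inner_smul_left, smul_smul]
      congr 1
      field_simp
  -- counting elements of A_H
  have countAH : ∀ x, AH.count x = ∑ μ ∈ P, if vH μ = x then m μ else 0 := by
    intro x
    rw [hAH, Multiset.count_bind, Finset.sum]
    congr 1
    apply Multiset.map_congr rfl
    intro μ _
    rw [Multiset.count_replicate]
  have memAH : ∀ x, x ∈ AH ↔ ∃ α ∈ P, vH α = x := by
    intro x
    rw [hAH, Multiset.mem_bind]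
    constructor
    · rintro ⟨α, hα, hx⟩
      exact ⟨α, hα, (Multiset.eq_of_mem_replicate hx).symm⟩
    · rintro ⟨α, hα, rfl⟩
      refine ⟨α, hα, Multiset.mem_replicate.mpr ⟨?_, rfl⟩⟩
      have := hm α (hPmem α hα).1; omega
  have L1 : ∀ α ∈ P, AH.count (vH α)
      = ∑ μ ∈ P.filter (fun μ => ∃ c : ℝ, μ = c • α), m μ := by
    intro α hα
    rw [countAH, Finset.sum_filter]
    apply Finset.sum_congr rfl
    intro μ hμ
    simp only [veq α hα μ hμ]
  have key1 : ∀ α ∈ P, ∀ β ∈ P, vH β = -vH α →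
      ∃ n ε : ℝ, n ≠ 0 ∧ (ε = 1 ∨ ε = -1) ∧
        H = n • (‖α‖⁻¹ • α + ε • ‖β‖⁻¹ • β) := by
    intro α hα β hβ hvβ
    obtain ⟨hαR, haH⟩ := hPmem α hα
    obtain ⟨hβR, hbH⟩ := hPmem β hβ
    rw [hvH, hvH] at hvβ
    exact aux_key1 H α β hH2 (norm_ne_zero_iff.mpr (hR α hαR))
      (norm_ne_zero_iff.mpr (hR β hβR)) haH hbH hvβ
  have key2 : ∀ α ∈ P, ∀ β ∈ P, ∀ n ε : ℝ, n ≠ 0 → (ε = 1 ∨ ε = -1) →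
      H = n • (‖α‖⁻¹ • α + ε • ‖β‖⁻¹ • β) → vH β = -vH α := by
    intro α hα β hβ n ε hn hε hHe
    obtain ⟨hαR, haH⟩ := hPmem α hα
    obtain ⟨hβR, hbH⟩ := hPmem β hβ
    rw [hvH, hvH]
    exact aux_key2 H α β n ε hn hε (norm_ne_zero_iff.mpr (hR α hαR))
      (norm_ne_zero_iff.mpr (hR β hβR)) haH hHe
  -- counts are invariant under negation of the argument
  have hcntneg : ∀ (S : Multiset V) (x : V),
      (S.map fun y => -y).count x = S.count (-x) := by
    intro S x
    have h := Multiset.count_map_eq_count' (fun y : V => -y) S neg_injective (-x)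
    simpa using h
  constructor
  · -- forward direction
    intro hinv
    have hcnt : ∀ x, AH.count (-x) = AH.count x := by
      intro x
      conv_rhs => rw [← hinv]
      rw [hcntneg]
    have hex : ∀ α ∈ P, ∃ β, β ∈ P ∧ vH β = -vH α := by
      intro α hα
      have h1 : vH α ∈ AH := (memAH _).mpr ⟨α, hα, rfl⟩
      have h2 : (-vH α) ∈ AH := by
        rw [← Multiset.count_pos] at h1 ⊢
        rw [hcnt (vH α)]
        exact h1
      obtain ⟨β, hβ, hβeq⟩ := (memAH _).mp h2
      exact ⟨β, hβ, hβeq⟩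
    set f : V → V := fun α => if h : α ∈ P then (hex α h).choose else α with hf
    have hfspec : ∀ α ∈ P, f α ∈ P ∧ vH (f α) = -vH α := by
      intro α hα
      rw [hf]
      simp only [dif_pos hα]
      exact (hex α hα).choose_spec
    refine ⟨f, fun α hα => (hfspec α hα).1, ?_, ?_, ?_⟩
    · intro α hα heq
      have h1 := (hfspec α hα).2
      rw [heq] at h1
      apply hvne α hα
      have h2 : vH α + vH α = 0 := by
        nth_rewrite 1 [h1]
        exact neg_add_cancel _
      have h3 : (2 : ℝ) • vH α = 0 := by rw [two_smul]; exact h2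
      have := smul_eq_zero.mp h3
      simpa using this
    · intro α hα
      exact key1 α hα (f α) (hfspec α hα).1 (hfspec α hα).2
    · intro α hα
      rw [← L1 α hα, ← L1 (f α) (hfspec α hα).1, (hfspec α hα).2]
      exact (hcnt (vH α)).symm
  · -- backward direction
    rintro ⟨f, hfP, hfne, hfeq, hfsum⟩
    have hneg : ∀ α ∈ P, vH (f α) = -vH α := by
      intro α hα
      obtain ⟨n, ε, hn, hε, hHe⟩ := hfeq α hα
      exact key2 α hα (f α) (hfP α hα) n ε hn hε hHe
    refine Multiset.ext.mpr fun x => ?_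
    rw [hcntneg]
    by_cases h1 : ∃ α ∈ P, vH α = x
    · obtain ⟨α, hα, rfl⟩ := h1
      rw [← hneg α hα, L1 (f α) (hfP α hα), L1 α hα]
      exact (hfsum α hα).symm
    · have h2 : ¬ ∃ α ∈ P, vH α = -x := by
        rintro ⟨α, hα, heq⟩
        exact h1 ⟨f α, hfP α hα, by rw [hneg α hα, heq, neg_neg]⟩
      rw [Multiset.count_eq_zero_of_notMem, Multiset.count_eq_zero_of_notMem]
      · intro hx
        exact h1 ((memAH x).mp hx)
      · intro hx
        exact h2 ((memAH (-x)).mp hx)
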